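/- Let L be an operator acting on positive functions ρ on intervals by (Lρ)(x) = ρ(g(x))·g'(x) for a C¹ map g with g' > 0 satisfying |ln g'(x) − ln g'(y)| ≤ Q₁|x−y|^{1/3} and |g(x) − g(y)| ≤ Λ₁^{−1}|x−y| for some Q₁ > 0 and Λ₁ > 1. If ρ is in the cone C(ϖ), i.e. ρ(u)/ρ(v) ≤ exp(ϖ|u−v|^{1/3}), then Lρ ∈ C(Λ₁^{−1/3}·ϖ + Q₁). In particular, for ϖ ≥ Q₁/(1 − Λ₁^{−1/3}), the cone C(ϖ) is invariant under L. -/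
import Mathlib


/-- Cone contraction for the transfer operator
`(Lρ)(x) = ρ(g x) · g'(x)` along a contracting inverse branch `g` with
Hölder-1/3 log-derivative: if `ρ ∈ C(ϖ)`, then
`Lρ ∈ C(Λ₁^{-1/3} ϖ + Q₁)`; in particular for `ϖ ≥ Q₁/(1 − Λ₁^{-1/3})`
the cone `C(ϖ)` is invariant. -/
theorem transfer_operator_cone_contraction
    (I J : Set ℝ) (g : ℝ → ℝ) (Q₁ Λ₁ ϖ : ℝ)
    (hQ : 0 < Q₁) (hΛ : 1 < Λ₁) (hϖ : 0 < ϖ)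
    (hmap : Set.MapsTo g I J)
    (hdiff : ∀ x ∈ I, DifferentiableAt ℝ g x ∧ 0 < deriv g x)
    (hdist : ∀ x ∈ I, ∀ y ∈ I,
      |Real.log (deriv g x) - Real.log (deriv g y)| ≤ Q₁ * |x - y| ^ ((1:ℝ)/3))
    (hcontr : ∀ x ∈ I, ∀ y ∈ I, |g x - g y| ≤ Λ₁⁻¹ * |x - y|)
    (ρ : ℝ → ℝ) (hρpos : ∀ y ∈ J, 0 < ρ y)
    (hρ : ∀ u ∈ J, ∀ v ∈ J, ρ u / ρ v ≤ Real.exp (ϖ * |u - v| ^ ((1:ℝ)/3))) :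
    (∀ x ∈ I, ∀ y ∈ I,
        (ρ (g x) * deriv g x) / (ρ (g y) * deriv g y)
          ≤ Real.exp ((Λ₁ ^ (-(1:ℝ)/3) * ϖ + Q₁) * |x - y| ^ ((1:ℝ)/3))) ∧
      (Q₁ / (1 - Λ₁ ^ (-(1:ℝ)/3)) ≤ ϖ →
        ∀ x ∈ I, ∀ y ∈ I,
          (ρ (g x) * deriv g x) / (ρ (g y) * deriv g y)
            ≤ Real.exp (ϖ * |x - y| ^ ((1:ℝ)/3))) := by
  have hΛpos : (0:ℝ) < Λ₁ := lt_trans one_pos hΛ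
  have hc : Λ₁ ^ (-(1:ℝ)/3) = Λ₁⁻¹ ^ ((1:ℝ)/3) := by
    rw [Real.inv_rpow hΛpos.le, ← Real.rpow_neg hΛpos.le, neg_div]
  have hclt : Λ₁ ^ (-(1:ℝ)/3) < 1 :=
    Real.rpow_lt_one_of_one_lt_of_neg hΛ (by norm_num)
  have hcpos : 0 < Λ₁ ^ (-(1:ℝ)/3) := Real.rpow_pos_of_pos hΛpos _
  have key : ∀ x ∈ I, ∀ y ∈ I,
      (ρ (g x) * deriv g x) / (ρ (g y) * deriv g y)
        ≤ Real.exp ((Λ₁ ^ (-(1:ℝ)/3) * ϖ + Q₁) * |x - y| ^ ((1:ℝ)/3)) := by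
    intro x hx y hy
    obtain ⟨-, hgx⟩ := hdiff x hx
    obtain ⟨-, hgy⟩ := hdiff y hy
    have hρx := hρpos _ (hmap hx)
    have hρy := hρpos _ (hmap hy)
    have habs : |g x - g y| ^ ((1:ℝ)/3) ≤ Λ₁ ^ (-(1:ℝ)/3) * |x - y| ^ ((1:ℝ)/3) := by
      rw [hc, ← Real.mul_rpow (by positivity) (abs_nonneg _)]
      exact Real.rpow_le_rpow (abs_nonneg _) (hcontr x hx y hy) (by norm_num)
    have h1 : ρ (g x) / ρ (g y)
        ≤ Real.exp (ϖ * (Λ₁ ^ (-(1:ℝ)/3) * |x - y| ^ ((1:ℝ)/3))) := by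
      refine (hρ _ (hmap hx) _ (hmap hy)).trans (Real.exp_le_exp.2 ?_)
      exact mul_le_mul_of_nonneg_left habs hϖ.le
    have h2 : deriv g x / deriv g y ≤ Real.exp (Q₁ * |x - y| ^ ((1:ℝ)/3)) := by
      have : deriv g x / deriv g y
          = Real.exp (Real.log (deriv g x) - Real.log (deriv g y)) := by
        rw [Real.exp_sub, Real.exp_log hgx, Real.exp_log hgy]
      rw [this]
      exact Real.exp_le_exp.2 ((le_abs_self _).trans (hdist x hx y hy))
    have hsplit : (ρ (g x) * deriv g x) / (ρ (g y) * deriv g y)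
        = (ρ (g x) / ρ (g y)) * (deriv g x / deriv g y) := by
      field_simp
    rw [hsplit]
    calc (ρ (g x) / ρ (g y)) * (deriv g x / deriv g y)
        ≤ Real.exp (ϖ * (Λ₁ ^ (-(1:ℝ)/3) * |x - y| ^ ((1:ℝ)/3)))
            * Real.exp (Q₁ * |x - y| ^ ((1:ℝ)/3)) := by
          apply mul_le_mul h1 h2 (by positivity) (Real.exp_nonneg _)
      _ = Real.exp ((Λ₁ ^ (-(1:ℝ)/3) * ϖ + Q₁) * |x - y| ^ ((1:ℝ)/3)) := by
          rw [← Real.exp_add]; ring_nf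
  refine ⟨key, fun hge x hx y hy => ?_⟩
  refine (key x hx y hy).trans (Real.exp_le_exp.2 ?_)
  have h1 : Λ₁ ^ (-(1:ℝ)/3) * ϖ + Q₁ ≤ ϖ := by
    rw [div_le_iff₀ (by linarith)] at hge
    nlinarith
  exact mul_le_mul_of_nonneg_right h1 (by positivity)
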